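/- Let x_1, ..., x_N be distinct elements of a field, y_1, ..., y_M arbitrary, and m ≥ 0 an integer with m + 1 + M - N ≥ 0. Then ∑_{I=1}^{N} x_I^m · ∏_{J=1}^{M}(x_I - y_J) / ∏_{J ≠ I}(x_I - x_J) = ∑_{n=0}^{m+1+M-N} e_{m-n+1+M-N}(-y_1, ..., -y_M) · h_n(x_1, ..., x_N), where e_k denotes the k-th elementary symmetric polynomial and h_n the complete homogeneous symmetric polynomial of degree n. -/

import Mathlib

open Finset

/-- The `k`-th elementary symmetric polynomial evaluated at `y_1, ..., y_M`. -/
def esymVal {K : Type*} [CommRing K] {M : ℕ} (k : ℕ) (y : Fin M → K) : K :=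
  ∑ s ∈ Finset.powersetCard k (Finset.univ : Finset (Fin M)), ∏ j ∈ s, y j

/-- The complete homogeneous symmetric polynomial of degree `n` evaluated at
`x_1, ..., x_N`: the sum over weakly increasing tuples `i_1 ≤ ... ≤ i_n` of
`x_{i_1} ⋯ x_{i_n}`. -/
def hsymVal {K : Type*} [CommRing K] {N : ℕ} (n : ℕ) (x : Fin N → K) : K :=
  ∑ f ∈ Finset.univ.filter (fun f : Fin n → Fin N => ∀ i j : Fin n, i ≤ j → f i ≤ f j),
    ∏ i : Fin n, x (f i)

section Aux
variable {K : Type*} [Field K]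

lemma esymVal_eq_zero {M k : ℕ} (y : Fin M → K) (hk : M < k) : esymVal k y = 0 := by
  unfold esymVal
  rw [Finset.powersetCard_eq_empty.2 (by simpa using hk), Finset.sum_empty]

lemma prod_sub_expand {M : ℕ} (y : Fin M → K) (t : K) :
    ∏ j : Fin M, (t - y j) =
      ∑ k ∈ Finset.range (M + 1), esymVal k (fun j => -y j) * t ^ (M - k) := by
  have : ∏ j : Fin M, (t - y j) = ∏ j : Fin M, ((-y j) + t) := by
    refine Finset.prod_congr rfl fun j _ => by ring
  rw [this, Finset.prod_add, Finset.sum_powerset]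
  refine Finset.sum_congr (by simp) fun k hk => ?_
  rw [esymVal, Finset.sum_mul]
  refine Finset.sum_congr rfl fun s hs => ?_
  rw [Finset.mem_powersetCard] at hs
  rw [Finset.prod_const, Finset.card_sdiff_of_subset hs.1, hs.2, Finset.card_univ, Fintype.card_fin]

lemma hsymVal_zero {N : ℕ} (x : Fin N → K) : hsymVal 0 x = 1 := by
  rw [hsymVal]
  rw [Finset.filter_true_of_mem (fun f _ => fun i => i.elim0)]
  simp

lemma hsymVal_of_isEmpty {n : ℕ} (x : Fin 0 → K) : hsymVal (n + 1) x = 0 := by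
  rw [hsymVal]
  have : (Finset.univ : Finset (Fin (n+1) → Fin 0)) = ∅ := by
    simp [Finset.univ_eq_empty]
  rw [this, Finset.filter_empty, Finset.sum_empty]

lemma hsymVal_succ {N n : ℕ} (x : Fin (N + 1) → K) :
    hsymVal (n + 1) x =
      hsymVal (n + 1) (x ∘ Fin.castSucc) + x (Fin.last N) * hsymVal n x := by
  classical
  rw [hsymVal,
    ← Finset.sum_filter_add_sum_filter_not _ (fun f => f (Fin.last n) = Fin.last N)]
  rw [add_comm]
  congr 1
  · -- f (last n) ≠ last N  ↦  monotone maps into Fin N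
    rw [hsymVal]
    refine Finset.sum_bij' (i := fun f hf => fun i => (f i).castPred ?_)
      (j := fun g hg => fun i => (g i).castSucc) ?_ ?_ ?_ ?_ ?_
    · -- f i ≠ last N
      rw [Finset.mem_filter, Finset.mem_filter] at hf
      obtain ⟨⟨-, hmono⟩, hne⟩ := hf
      have h1 : f i ≤ f (Fin.last n) := hmono i (Fin.last n) (Fin.le_last i)
      have h2 : f (Fin.last n) < Fin.last N :=
        lt_of_le_of_ne (Fin.le_last _) hne
      exact (lt_of_le_of_lt h1 h2).ne
    · intro f hf
      rw [Finset.mem_filter, Finset.mem_filter] at hf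
      rw [Finset.mem_filter]
      refine ⟨Finset.mem_univ _, fun i j hij => ?_⟩
      have := hf.1.2 i j hij
      simp only [Fin.le_def, Fin.coe_castPred]
      exact this
    · intro g hg
      rw [Finset.mem_filter] at hg
      rw [Finset.mem_filter, Finset.mem_filter]
      constructor
      · refine ⟨Finset.mem_univ _, fun i j hij => ?_⟩
        exact Fin.castSucc_le_castSucc_iff.2 (hg.2 i j hij)
      · exact (Fin.castSucc_lt_last _).ne
    · intro f hf; funext i; simp
    · intro g hg; funext i; simp
    · intro f hf
      refine Finset.prod_congr rfl fun i _ => ?_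
      simp
  · -- f (last n) = last N  ↦  monotone maps Fin n → Fin (N+1)
    rw [hsymVal, Finset.mul_sum]
    refine Finset.sum_bij' (i := fun f hf => f ∘ Fin.castSucc)
      (j := fun g hg => Fin.snoc g (Fin.last N)) ?_ ?_ ?_ ?_ ?_
    · intro f hf
      rw [Finset.mem_filter, Finset.mem_filter] at hf
      rw [Finset.mem_filter]
      exact ⟨Finset.mem_univ _, fun i j hij => hf.1.2 _ _ (Fin.castSucc_le_castSucc_iff.2 hij)⟩
    · intro g hg
      rw [Finset.mem_filter] at hg
      rw [Finset.mem_filter, Finset.mem_filter]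
      refine ⟨⟨Finset.mem_univ _, fun i j hij => ?_⟩, by simp⟩
      by_cases hj : j = Fin.last n
      · subst hj
        simpa using Fin.le_last _
      · have hi : i ≠ Fin.last n := fun h => hj (le_antisymm (Fin.le_last j) (h ▸ hij))
        obtain ⟨i', rfl⟩ := Fin.exists_castSucc_eq.2 hi
        obtain ⟨j', rfl⟩ := Fin.exists_castSucc_eq.2 hj
        simp only [Fin.snoc_castSucc]
        exact hg.2 i' j' (Fin.castSucc_le_castSucc_iff.1 hij)
    · intro f hf
      rw [Finset.mem_filter, Finset.mem_filter] at hf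
      funext i
      induction i using Fin.lastCases with
      | last => simp [hf.2]
      | cast i => simp
    · intro g hg; funext i; simp
    · intro f hf
      rw [Finset.mem_filter, Finset.mem_filter] at hf
      rw [Fin.prod_univ_castSucc, hf.2, mul_comm]
      rfl

lemma erase_prod_split {N : ℕ} (g : Fin (N + 1) → K) (i : Fin N) :
    ∏ J ∈ (Finset.univ : Finset (Fin (N + 1))).erase i.castSucc, g J
      = g (Fin.last N) * ∏ J ∈ (Finset.univ : Finset (Fin N)).erase i, g J.castSucc := by
  classical
  have huniv : (Finset.univ : Finset (Fin (N + 1)))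
      = insert (Fin.last N) (Finset.univ.map Fin.castSuccEmb) := by
    ext j
    simp only [Finset.mem_univ, true_iff, Finset.mem_insert, Finset.mem_map, true_and]
    induction j using Fin.lastCases with
    | last => exact Or.inl rfl
    | cast j => exact Or.inr ⟨j, rfl⟩
  rw [huniv, Finset.erase_insert_of_ne (by simp [(Fin.castSucc_lt_last i).ne'])]
  rw [show i.castSucc = Fin.castSuccEmb i from rfl, ← Finset.map_erase,
    Finset.prod_insert, Finset.prod_map]
  · rfl
  · simp only [Finset.mem_map, Finset.mem_erase]
    rintro ⟨j, -, hj⟩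
    exact (Fin.castSucc_lt_last j).ne hj

open Polynomial in
lemma pow_sum_low {N : ℕ} (x : Fin N → K) (hx : Function.Injective x) (k : ℕ) (hk : k < N) :
    ∑ I : Fin N, x I ^ k / ∏ J ∈ Finset.univ.erase I, (x I - x J)
      = if k + 1 = N then 1 else 0 := by
  classical
  have hvs : Set.InjOn x (Finset.univ : Finset (Fin N)) := fun a _ b _ hab => hx hab
  have hdeg : (X ^ k : K[X]).degree < ((Finset.univ : Finset (Fin N)).card : ℕ) := by
    rw [degree_X_pow]
    exact_mod_cast (by simpa using hk)
  have hint := Lagrange.eq_interpolate (f := (X ^ k : K[X])) hvs hdeg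
  have hco := congrArg (fun p => Polynomial.coeff p (N - 1)) hint
  simp only [Lagrange.interpolate_apply, Polynomial.finset_sum_coeff,
    Polynomial.coeff_C_mul, Polynomial.eval_pow, Polynomial.eval_X] at hco
  have hbasis : ∀ I : Fin N, (Lagrange.basis Finset.univ x I).coeff (N - 1)
      = (∏ J ∈ Finset.univ.erase I, (x I - x J))⁻¹ := by
    intro I
    have hnd : (Lagrange.basis Finset.univ x I).natDegree = N - 1 := by
      simpa using Lagrange.natDegree_basis hvs (Finset.mem_univ I)
    rw [← hnd, Polynomial.coeff_natDegree, Lagrange.basis]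
    rw [Polynomial.leadingCoeff_prod]
    rw [← Finset.prod_inv_distrib]
    refine Finset.prod_congr rfl fun J hJ => ?_
    have hne : x I ≠ x J := fun hIJ =>
      (Finset.mem_erase.1 hJ).1 (hx hIJ).symm
    rw [Lagrange.basisDivisor, Polynomial.leadingCoeff_mul, Polynomial.leadingCoeff_C,
      leadingCoeff_X_sub_C, mul_one]
  rw [Polynomial.coeff_X_pow] at hco
  have : ∀ I : Fin N, x I ^ k / ∏ J ∈ Finset.univ.erase I, (x I - x J)
      = x I ^ k * (Lagrange.basis Finset.univ x I).coeff (N - 1) := by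
    intro I; rw [hbasis, div_eq_mul_inv]
  rw [Finset.sum_congr rfl fun I _ => this I, ← hco]
  by_cases hkN : k + 1 = N
  · rw [if_pos hkN, if_pos (by omega)]
  · rw [if_neg hkN, if_neg (by omega)]


lemma pow_sum_rec {N : ℕ} (x : Fin (N + 1) → K) (hx : Function.Injective x) (k : ℕ) :
    ∑ I : Fin (N + 1), x I ^ (k + 1) / ∏ J ∈ Finset.univ.erase I, (x I - x J)
      = (∑ i : Fin N, (x ∘ Fin.castSucc) i ^ k /
          ∏ J ∈ Finset.univ.erase i, ((x ∘ Fin.castSucc) i - (x ∘ Fin.castSucc) J))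
        + x (Fin.last N) *
          ∑ I : Fin (N + 1), x I ^ k / ∏ J ∈ Finset.univ.erase I, (x I - x J) := by
  classical
  have key : ∀ I : Fin (N + 1),
      x I ^ (k + 1) / ∏ J ∈ Finset.univ.erase I, (x I - x J)
        = x I ^ k * (x I - x (Fin.last N)) / ∏ J ∈ Finset.univ.erase I, (x I - x J)
          + x (Fin.last N) * (x I ^ k / ∏ J ∈ Finset.univ.erase I, (x I - x J)) := by
    intro I
    rw [mul_div_assoc', ← add_div]
    congr 1
    ring
  rw [Finset.sum_congr rfl fun I _ => key I, Finset.sum_add_distrib, ← Finset.mul_sum]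
  congr 1
  rw [Fin.sum_univ_castSucc]
  have hlast : x (Fin.last N) ^ k * (x (Fin.last N) - x (Fin.last N)) /
      ∏ J ∈ Finset.univ.erase (Fin.last N), (x (Fin.last N) - x J) = 0 := by
    rw [sub_self, mul_zero, zero_div]
  rw [hlast, add_zero]
  refine Finset.sum_congr rfl fun i _ => ?_
  rw [erase_prod_split (fun J => x i.castSucc - x J) i]
  have hc : x i.castSucc - x (Fin.last N) ≠ 0 := by
    rw [sub_ne_zero]
    exact fun hEq => (Fin.castSucc_lt_last i).ne (hx hEq)
  rw [mul_comm (x i.castSucc ^ k) (x i.castSucc - x (Fin.last N)),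
    mul_div_mul_left _ _ hc]
  rfl

lemma pow_sum {N : ℕ} (x : Fin N → K) (hx : Function.Injective x) (k : ℕ) :
    ∑ I : Fin N, x I ^ k / ∏ J ∈ Finset.univ.erase I, (x I - x J)
      = if N ≤ k + 1 then hsymVal (k + 1 - N) x else 0 := by
  induction N generalizing k with
  | zero =>
    simp [hsymVal_of_isEmpty]
  | succ N ihN =>
    induction k with
    | zero =>
      rw [pow_sum_low x hx 0 (Nat.succ_pos N)]
      rcases Nat.eq_zero_or_pos N with hN | hN
      · subst hN
        simp [hsymVal_zero]
      · rw [if_neg (by omega), if_neg (by omega)]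
    | succ k ihk =>
      by_cases hkN : k + 1 < N + 1
      · rw [pow_sum_low x hx (k + 1) hkN]
        by_cases hEq : k + 1 + 1 = N + 1
        · rw [if_pos hEq, if_pos (by omega), show k + 1 + 1 - (N + 1) = 0 by omega,
            hsymVal_zero]
        · rw [if_neg hEq, if_neg (by omega)]
      · have hkN' : N ≤ k := by omega
        rw [pow_sum_rec x hx k, ihk,
          ihN (x ∘ Fin.castSucc) (hx.comp (Fin.castSucc_injective N)) k,
          if_pos (by omega), if_pos (by omega), if_pos (by omega)]
        rw [show k + 1 + 1 - (N + 1) = (k - N) + 1 by omega,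
          show k + 1 - N = (k - N) + 1 by omega,
          show k + 1 - (N + 1) = k - N by omega]
        exact (hsymVal_succ x).symm

end Aux

/-- Key summation formula: for distinct `x_1, ..., x_N`, arbitrary `y_1, ..., y_M`,
and `m ≥ 0` with `m + 1 + M - N ≥ 0`,
`∑_I x_I^m ∏_J (x_I - y_J) / ∏_{J ≠ I} (x_I - x_J)
   = ∑_{n=0}^{m+1+M-N} e_{m-n+1+M-N}(-y) · h_n(x)`. -/
theorem lagrange_summation_formula {K : Type*} [Field K] [CharZero K] {N M : ℕ}
    (x : Fin N → K) (hx : Function.Injective x) (y : Fin M → K)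
    (m : ℕ) (h : N ≤ m + 1 + M) :
    ∑ I : Fin N, (x I ^ m * ∏ J : Fin M, (x I - y J)) / ∏ J ∈ Finset.univ.erase I, (x I - x J)
      = ∑ n ∈ Finset.range (m + 1 + M - N + 1),
          esymVal (m + 1 + M - N - n) (fun j => -y j) * hsymVal n x := by
  classical
  set d := m + 1 + M - N with hd
  have hstep1 : ∀ I : Fin N,
      (x I ^ m * ∏ J : Fin M, (x I - y J)) / ∏ J ∈ Finset.univ.erase I, (x I - x J)
        = ∑ j ∈ Finset.range (M + 1), esymVal j (fun j => -y j) *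
            (x I ^ (m + (M - j)) / ∏ J ∈ Finset.univ.erase I, (x I - x J)) := by
    intro I
    rw [prod_sub_expand y (x I), Finset.mul_sum, Finset.sum_div]
    refine Finset.sum_congr rfl fun j hj => ?_
    rw [pow_add, div_eq_mul_inv, div_eq_mul_inv]
    ring
  rw [Finset.sum_congr rfl fun I _ => hstep1 I, Finset.sum_comm]
  have hstep2 : ∀ j ∈ Finset.range (M + 1),
      ∑ I : Fin N, esymVal j (fun j => -y j) *
          (x I ^ (m + (M - j)) / ∏ J ∈ Finset.univ.erase I, (x I - x J))
        = esymVal j (fun j => -y j) * (if j ≤ d then hsymVal (d - j) x else 0) := by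
    intro j hj
    rw [← Finset.mul_sum, pow_sum x hx (m + (M - j))]
    rw [Finset.mem_range] at hj
    congr 1
    by_cases hjd : j ≤ d
    · rw [if_pos (by omega), if_pos hjd, show m + (M - j) + 1 - N = d - j by omega]
    · rw [if_neg (by omega), if_neg hjd]
  rw [Finset.sum_congr rfl hstep2]
  have hR : ∑ n ∈ Finset.range (d + 1), esymVal (d - n) (fun j => -y j) * hsymVal n x
      = ∑ j ∈ Finset.range (d + 1), esymVal j (fun j => -y j) *
          (if j ≤ d then hsymVal (d - j) x else 0) := by
    rw [← Finset.sum_range_reflect]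
    refine Finset.sum_congr rfl fun j hj => ?_
    rw [Finset.mem_range] at hj
    rw [show d + 1 - 1 - j = d - j by omega, show d - (d - j) = j by omega,
      if_pos (by omega)]
  rw [hR]
  have h1 : ∑ j ∈ Finset.range (M + 1), esymVal j (fun j => -y j) *
        (if j ≤ d then hsymVal (d - j) x else 0)
      = ∑ j ∈ Finset.range (M + d + 1), esymVal j (fun j => -y j) *
        (if j ≤ d then hsymVal (d - j) x else 0) := by
    refine Finset.sum_subset (Finset.range_subset_range.2 (by omega)) fun j hj hnj => ?_
    rw [Finset.mem_range] at hj hnj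
    rw [esymVal_eq_zero _ (by omega), zero_mul]
  have h2 : ∑ j ∈ Finset.range (d + 1), esymVal j (fun j => -y j) *
        (if j ≤ d then hsymVal (d - j) x else 0)
      = ∑ j ∈ Finset.range (M + d + 1), esymVal j (fun j => -y j) *
        (if j ≤ d then hsymVal (d - j) x else 0) := by
    refine Finset.sum_subset (Finset.range_subset_range.2 (by omega)) fun j hj hnj => ?_
    rw [Finset.mem_range] at hj hnj
    rw [if_neg (by omega), mul_zero]
  rw [h1, h2]
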